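/- For every function f in H^1(ℝ), the sharp Gagliardo–Nirenberg inequality ‖f‖_{L^6}^6 ≤ (4/π²) ‖f‖_{L^2}^4 ‖f'‖_{L^2}^2 holds. -/

import Mathlib

set_option maxHeartbeats 1000000

open MeasureTheory Filter Set Real Topology intervalIntegral ENNReal

/-- An integrable function having a limit at `+∞` has limit zero. -/
lemma gn_limit_zero_atTop {v : ℝ → ℝ} (hv : Integrable v (volume : Measure ℝ)) {l : ℝ}
    (h : Tendsto v atTop (𝓝 l)) : l = 0 := by
  by_contra hl
  have hl2 : 0 < |l| / 2 := by positivity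
  have h2 : ∀ᶠ x in atTop, |v x - l| < |l| / 2 := by
    have := Metric.tendsto_nhds.mp h (|l| / 2) hl2
    simpa [Real.dist_eq] using this
  obtain ⟨a, ha⟩ := eventually_atTop.mp h2
  have hconst : IntegrableOn (fun _ : ℝ => |l| / 2) (Ici a) volume := by
    apply Integrable.mono' (hv.abs.integrableOn) aestronglyMeasurable_const
    filter_upwards [ae_restrict_mem measurableSet_Ici] with x hx
    have h1 := ha x hx
    rw [Real.norm_eq_abs, abs_of_nonneg (le_of_lt hl2)]
    have : |l| - |v x| ≤ |v x - l| := by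
      have := abs_sub_abs_le_abs_sub l (v x)
      rw [abs_sub_comm] at this
      linarith
    linarith
  rw [integrableOn_const_iff] at hconst
  rcases hconst with h' | h'
  · simp [hl] at h'
  · simp [Real.volume_Ici] at h'

/-- An integrable function having a limit at `-∞` has limit zero. -/
lemma gn_limit_zero_atBot {v : ℝ → ℝ} (hv : Integrable v (volume : Measure ℝ)) {l : ℝ}
    (h : Tendsto v atBot (𝓝 l)) : l = 0 := by
  by_contra hl
  have hl2 : 0 < |l| / 2 := by positivity
  have h2 : ∀ᶠ x in atBot, |v x - l| < |l| / 2 := by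
    have := Metric.tendsto_nhds.mp h (|l| / 2) hl2
    simpa [Real.dist_eq] using this
  obtain ⟨a, ha⟩ := eventually_atBot.mp h2
  have hconst : IntegrableOn (fun _ : ℝ => |l| / 2) (Iic a) volume := by
    apply Integrable.mono' (hv.abs.integrableOn) aestronglyMeasurable_const
    filter_upwards [ae_restrict_mem measurableSet_Iic] with x hx
    have h1 := ha x hx
    rw [Real.norm_eq_abs, abs_of_nonneg (le_of_lt hl2)]
    have : |l| - |v x| ≤ |v x - l| := by
      have := abs_sub_abs_le_abs_sub l (v x)
      rw [abs_sub_comm] at this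
      linarith
    linarith
  rw [integrableOn_const_iff] at hconst
  rcases hconst with h' | h'
  · simp [hl] at h'
  · simp [Real.volume_Iic] at h'

/-- A continuous function tending to `0` at both ends, positive somewhere, attains its
global maximum. -/
lemma gn_exists_max {v : ℝ → ℝ} (hc : Continuous v)
    (htop : Tendsto v atTop (𝓝 0)) (hbot : Tendsto v atBot (𝓝 0))
    {x₀ : ℝ} (h₀ : 0 < v x₀) : ∃ z, ∀ x, v x ≤ v z := by
  obtain ⟨b, hb⟩ := eventually_atTop.mp (htop.eventually_lt_const h₀)
  obtain ⟨a, ha⟩ := eventually_atBot.mp (hbot.eventually_lt_const h₀)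
  set a' : ℝ := min a x₀ with ha'
  set b' : ℝ := max b x₀ with hb'
  have hx₀ : x₀ ∈ Icc a' b' := ⟨min_le_right _ _, le_max_right _ _⟩
  obtain ⟨z, hz, hmax⟩ := isCompact_Icc.exists_isMaxOn ⟨x₀, hx₀⟩ (hc.continuousOn)
  refine ⟨z, fun x => ?_⟩
  by_cases hx : x ∈ Icc a' b'
  · exact hmax hx
  · have hle : v x ≤ v x₀ := by
      rcases not_and_or.mp hx with h | h
      · push_neg at h
        exact le_of_lt (ha x (by linarith [min_le_left a x₀]))
      · push_neg at h
        exact le_of_lt (hb x (by linarith [le_max_left b x₀]))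
    exact hle.trans (hmax hx₀)

lemma gn_half : (∫ t in (0:ℝ)..1, Real.sqrt (1 - t ^ 2)) = π / 4 := by
  have hii : ∀ a b : ℝ, IntervalIntegrable (fun t => Real.sqrt (1 - t ^ 2)) volume a b := by
    intro a b
    exact (Continuous.intervalIntegrable (by continuity) a b)
  have hrefl : (∫ t in (-1:ℝ)..0, Real.sqrt (1 - t ^ 2))
      = ∫ t in (0:ℝ)..1, Real.sqrt (1 - t ^ 2) := by
    have := integral_comp_neg (a := (0:ℝ)) (b := 1) (fun t => Real.sqrt (1 - t ^ 2))
    simp only [neg_neg, neg_zero] at this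
    rw [← this]
    congr 1
    ext t
    ring_nf
  have hsplit := integral_add_adjacent_intervals (hii (-1) 0) (hii 0 1)
  rw [hrefl] at hsplit
  have h2 : (∫ t in (-1:ℝ)..1, Real.sqrt (1 - t ^ 2)) = π / 2 := integral_sqrt_one_sub_sq
  linarith [hsplit, h2]

lemma gn_quarter_circle {M : ℝ} (hM : 0 < M) :
    (∫ t in (0:ℝ)..M, Real.sqrt (M ^ 2 - t ^ 2)) = π * M ^ 2 / 4 := by
  have h := integral_comp_mul_right (a := (0:ℝ)) (b := 1)
      (f := fun t => Real.sqrt (M ^ 2 - t ^ 2)) (ne_of_gt hM)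
  simp only [zero_mul, one_mul, smul_eq_mul] at h
  have h2 : (∫ x in (0:ℝ)..1, Real.sqrt (M ^ 2 - (x * M) ^ 2))
      = M * ∫ t in (0:ℝ)..1, Real.sqrt (1 - t ^ 2) := by
    rw [← intervalIntegral.integral_const_mul]
    apply intervalIntegral.integral_congr
    intro x _
    simp only
    rw [show M ^ 2 - (x * M) ^ 2 = M ^ 2 * (1 - x ^ 2) by ring,
      Real.sqrt_mul (sq_nonneg M), Real.sqrt_sq (le_of_lt hM)]
  rw [h2, gn_half] at h
  have := congrArg (fun y => M * y) h
  rw [← mul_assoc, ← mul_assoc, mul_inv_cancel₀ (ne_of_gt hM), one_mul] at this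
  rw [← this]
  ring


lemma gn_core (v w u : ℝ → ℝ)
    (hdv : ∀ x, HasDerivAt v (w x) x)
    (hv0 : ∀ x, 0 ≤ v x)
    (hu0 : ∀ x, 0 ≤ u x)
    (hw_le : ∀ x, |w x| ≤ 2 * Real.sqrt (v x) * u x)
    (hv_int : Integrable v (volume : Measure ℝ))
    (hu2 : MemLp u 2 (volume : Measure ℝ)) :
    Integrable (fun x => v x ^ 3) (volume : Measure ℝ) ∧
      ∫ x, v x ^ 3 ≤ 4 / π ^ 2 * (∫ x, v x) ^ 2 * ∫ x, u x ^ 2 := by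
  have hvc : Continuous v := by
    rw [continuous_iff_continuousAt]; exact fun x => (hdv x).continuousAt
  have hu2_int : Integrable (fun x => u x ^ 2) volume := hu2.integrable_sq
  have hwm : AEStronglyMeasurable w volume := by
    have hww : w = deriv v := funext fun x => ((hdv x).deriv).symm
    rw [hww]; exact (measurable_deriv v).aestronglyMeasurable
  have hum : AEStronglyMeasurable u volume := hu2.1
  have hw_bd : ∀ x, ‖w x‖ ≤ v x + u x ^ 2 := by
    intro x
    rw [Real.norm_eq_abs]
    have h1 := hw_le x
    have h2 : 2 * Real.sqrt (v x) * u x ≤ v x + u x ^ 2 := by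
      nlinarith [sq_nonneg (Real.sqrt (v x) - u x), Real.sq_sqrt (hv0 x),
        Real.sqrt_nonneg (v x), hu0 x]
    linarith
  have hw_int : Integrable w volume := by
    apply Integrable.mono' (hv_int.add hu2_int) hwm
    filter_upwards with x
    exact hw_bd x
  -- limits of v at ±∞ are 0
  have hftc : ∀ x : ℝ, v x - v 0 = ∫ t in (0:ℝ)..x, w t := by
    intro x
    rw [intervalIntegral.integral_eq_sub_of_hasDerivAt (fun t _ => hdv t)
      (hw_int.intervalIntegrable)]
  have htop : Tendsto v atTop (𝓝 0) := by
    have h1 : Tendsto (fun x => v 0 + ∫ t in (0:ℝ)..x, w t) atTop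
        (𝓝 (v 0 + ∫ t in Ioi (0:ℝ), w t)) :=
      tendsto_const_nhds.add
        (intervalIntegral_tendsto_integral_Ioi 0 hw_int.integrableOn tendsto_id)
    have h2 : Tendsto v atTop (𝓝 (v 0 + ∫ t in Ioi (0:ℝ), w t)) := by
      apply h1.congr
      intro x
      have := hftc x
      linarith
    have h3 := gn_limit_zero_atTop hv_int h2
    rwa [h3] at h2
  have hbot : Tendsto v atBot (𝓝 0) := by
    have h1 : Tendsto (fun x => v 0 - ∫ t in x..(0:ℝ), w t) atBot
        (𝓝 (v 0 - ∫ t in Iic (0:ℝ), w t)) :=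
      tendsto_const_nhds.sub
        (intervalIntegral_tendsto_integral_Iic 0 hw_int.integrableOn tendsto_id)
    have h2 : Tendsto v atBot (𝓝 (v 0 - ∫ t in Iic (0:ℝ), w t)) := by
      apply h1.congr
      intro x
      have h4 := hftc x
      have h5 : (∫ t in x..(0:ℝ), w t) = -∫ t in (0:ℝ)..x, w t :=
        intervalIntegral.integral_symm 0 x
      rw [h5]
      linarith
    have h3 := gn_limit_zero_atBot hv_int h2
    rwa [h3] at h2
  -- trivial case
  by_cases hpos : ∃ x₀, 0 < v x₀
  swap
  · push_neg at hpos
    have hv00 : ∀ x, v x = 0 := fun x => le_antisymm (hpos x) (hv0 x)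
    constructor
    · simpa [hv00] using (integrable_zero ℝ ℝ (volume : Measure ℝ))
    · have h0 : (∫ x, v x ^ 3) = 0 := by simp [hv00]
      rw [h0]
      have hA : 0 ≤ ∫ x, v x := integral_nonneg fun x => hv0 x
      have hD : 0 ≤ ∫ x, u x ^ 2 := integral_nonneg fun x => sq_nonneg _
      positivity
  obtain ⟨x₀, hx₀⟩ := hpos
  obtain ⟨z, hz⟩ := gn_exists_max hvc htop hbot hx₀
  set M : ℝ := v z with hM_def
  have hM : 0 < M := lt_of_lt_of_le hx₀ (hz x₀)
  have hvM : ∀ x, v x ≤ M := hz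
  -- v^3 integrable
  have hv3_int : Integrable (fun x => v x ^ 3) volume := by
    apply Integrable.mono' (hv_int.const_mul (M ^ 2)) ((hvc.pow 3).aestronglyMeasurable)
    filter_upwards with x
    rw [Real.norm_eq_abs, Pi.pow_apply, abs_of_nonneg (pow_nonneg (hv0 x) 3)]
    nlinarith [mul_nonneg (mul_nonneg (hv0 x) (sub_nonneg.2 (hvM x)))
      (add_nonneg hM.le (hv0 x))]
  refine ⟨hv3_int, ?_⟩
  -- the weight g and its primitive G
  set g : ℝ → ℝ := fun s => Real.sqrt (M ^ 2 - s ^ 2) with hg_def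
  have hgc : Continuous g := by
    apply Real.continuous_sqrt.comp
    continuity
  have hg0 : ∀ s, 0 ≤ g s := fun s => Real.sqrt_nonneg _
  have hgM : ∀ s, g s ≤ M := by
    intro s
    calc Real.sqrt (M ^ 2 - s ^ 2) ≤ Real.sqrt (M ^ 2) :=
          Real.sqrt_le_sqrt (by nlinarith [sq_nonneg s])
      _ = M := Real.sqrt_sq hM.le
  set G : ℝ → ℝ := fun s => ∫ t in (0:ℝ)..s, g t with hG_def
  have hG : ∀ s, HasDerivAt G (g s) s := fun s => (hgc.integral_hasStrictDerivAt 0 s).hasDerivAt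
  have hGc : Continuous G := by
    rw [continuous_iff_continuousAt]; exact fun s => (hG s).continuousAt
  have hG0 : G 0 = 0 := intervalIntegral.integral_same
  have hGM : G M = π * M ^ 2 / 4 := gn_quarter_circle hM
  have hGv : ∀ x, HasDerivAt (fun y => G (v y)) (g (v x) * w x) x :=
    fun x => (hG (v x)).comp x (hdv x)
  have hgvw_int : Integrable (fun x => g (v x) * w x) volume := by
    apply Integrable.mono' (hw_int.abs.const_mul M)
      (((hgc.comp hvc).aestronglyMeasurable).mul hwm)
    filter_upwards with x
    simp only [Pi.mul_apply, Function.comp_apply]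
    rw [Real.norm_eq_abs, abs_mul, abs_of_nonneg (hg0 _)]
    exact mul_le_mul_of_nonneg_right (hgM _) (abs_nonneg _)
  have hGtop : Tendsto (fun x => G (v x)) atTop (𝓝 0) := by
    have h := (hGc.tendsto 0).comp htop
    rwa [hG0] at h
  have hGbot : Tendsto (fun x => G (v x)) atBot (𝓝 0) := by
    have h := (hGc.tendsto 0).comp hbot
    rwa [hG0] at h
  have hIic : (∫ x in Iic z, g (v x) * w x) = G M := by
    have h := integral_Iic_of_hasDerivAt_of_tendsto' (a := z) (fun x _ => hGv x)
      (hgvw_int.integrableOn) hGbot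
    rw [h, sub_zero]
  have hIoi : (∫ x in Ioi z, g (v x) * w x) = -(G M) := by
    have h := integral_Ioi_of_hasDerivAt_of_tendsto' (a := z) (fun x _ => hGv x)
      (hgvw_int.integrableOn) hGtop
    rw [h, zero_sub]
  have habs : π * M ^ 2 / 2 ≤ ∫ x, |g (v x) * w x| := by
    have hsplit : (∫ x in Iic z, |g (v x) * w x|) + (∫ x in Ioi z, |g (v x) * w x|)
        = ∫ x, |g (v x) * w x| :=
      integral_Iic_add_Ioi hgvw_int.abs.integrableOn hgvw_int.abs.integrableOn
    have h1 : G M ≤ ∫ x in Iic z, |g (v x) * w x| := by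
      rw [← hIic]
      exact integral_mono hgvw_int.integrableOn hgvw_int.abs.integrableOn
        (fun x => le_abs_self _)
    have h2 : G M ≤ ∫ x in Ioi z, |g (v x) * w x| := by
      have h3 : -∫ x in Ioi z, g (v x) * w x ≤ ∫ x in Ioi z, |g (v x) * w x| := by
        rw [← MeasureTheory.integral_neg]
        exact integral_mono hgvw_int.integrableOn.neg hgvw_int.abs.integrableOn
          (fun x => neg_le_abs _)
      rw [hIoi, neg_neg] at h3
      exact h3
    have h4 : π * M ^ 2 / 2 = G M + G M := by rw [hGM]; ring
    linarith [hsplit, h1, h2]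
  -- Cauchy–Schwarz step
  set ψ : ℝ → ℝ := fun x => v x * (M ^ 2 - v x ^ 2) with hψ_def
  have hψ0 : ∀ x, 0 ≤ ψ x := by
    intro x
    apply mul_nonneg (hv0 x)
    nlinarith [hvM x, hv0 x, hM.le]
  have hψc : Continuous ψ := hvc.mul (continuous_const.sub (hvc.pow 2))
  have hψ_int : Integrable ψ volume := by
    apply Integrable.mono' (hv_int.const_mul (M ^ 2)) hψc.aestronglyMeasurable
    filter_upwards with x
    rw [Real.norm_eq_abs, abs_of_nonneg (hψ0 x)]
    simp only [hψ_def]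
    nlinarith [mul_nonneg (hv0 x) (sq_nonneg (v x))]
  have hsqψc : Continuous (fun x => Real.sqrt (ψ x)) := Real.continuous_sqrt.comp hψc
  have hpoint : ∀ x, |g (v x) * w x| ≤ (2 * u x) * Real.sqrt (ψ x) := by
    intro x
    rw [abs_mul, abs_of_nonneg (hg0 _)]
    have h1 : g (v x) * |w x| ≤ g (v x) * (2 * Real.sqrt (v x) * u x) :=
      mul_le_mul_of_nonneg_left (hw_le x) (hg0 _)
    have h2 : Real.sqrt (ψ x) = Real.sqrt (v x) * g (v x) := by
      rw [hψ_def]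
      exact Real.sqrt_mul (hv0 x) _
    rw [h2]
    nlinarith [h1]
  have h2usq_int : Integrable (fun x => (2 * u x) * Real.sqrt (ψ x)) volume := by
    apply Integrable.mono' (((hu2.const_mul 2).integrable_sq).add hψ_int)
      ((hum.const_mul 2).mul hsqψc.aestronglyMeasurable)
    filter_upwards with x
    simp only [Pi.mul_apply, Pi.add_apply]
    rw [Real.norm_eq_abs, abs_of_nonneg
      (mul_nonneg (mul_nonneg (by norm_num) (hu0 x)) (Real.sqrt_nonneg _))]
    nlinarith [sq_nonneg (2 * u x - Real.sqrt (ψ x)), Real.sq_sqrt (hψ0 x),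
      Real.sqrt_nonneg (ψ x), hu0 x]
  have hmono : (∫ x, |g (v x) * w x|) ≤ ∫ x, (2 * u x) * Real.sqrt (ψ x) :=
    integral_mono hgvw_int.abs h2usq_int hpoint
  have h2u_m : MemLp (fun x => 2 * u x) (ENNReal.ofReal 2) volume := by
    rw [show ENNReal.ofReal 2 = 2 by simp]
    exact hu2.const_mul 2
  have hsqψ_m : MemLp (fun x => Real.sqrt (ψ x)) (ENNReal.ofReal 2) volume := by
    rw [show ENNReal.ofReal 2 = 2 by simp]
    rw [memLp_two_iff_integrable_sq hsqψc.aestronglyMeasurable]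
    apply hψ_int.congr
    filter_upwards with x
    rw [Real.sq_sqrt (hψ0 x)]
  have hpq : (2:ℝ).HolderConjugate 2 := by constructor <;> norm_num
  have hCS := integral_mul_le_Lp_mul_Lq_of_nonneg hpq
    (Eventually.of_forall fun x => mul_nonneg (by norm_num) (hu0 x))
    (Eventually.of_forall fun x => Real.sqrt_nonneg (ψ x)) h2u_m hsqψ_m
  -- rewrite the rpow's
  have hrw1 : (∫ x, (2 * u x) ^ (2:ℝ)) = 4 * ∫ x, u x ^ 2 := by
    rw [← MeasureTheory.integral_const_mul]
    apply MeasureTheory.integral_congr_ae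
    filter_upwards with x
    rw [Real.rpow_two]
    ring
  have hrw2 : (∫ x, Real.sqrt (ψ x) ^ (2:ℝ)) = ∫ x, ψ x := by
    apply MeasureTheory.integral_congr_ae
    filter_upwards with x
    rw [Real.rpow_two, Real.sq_sqrt (hψ0 x)]
  rw [hrw1, hrw2] at hCS
  have hD0 : 0 ≤ ∫ x, u x ^ 2 := integral_nonneg fun x => sq_nonneg _
  have hψI0 : 0 ≤ ∫ x, ψ x := integral_nonneg hψ0
  have hCS' : (∫ x, (2 * u x) * Real.sqrt (ψ x))
      ≤ Real.sqrt (4 * ∫ x, u x ^ 2) * Real.sqrt (∫ x, ψ x) := by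
    rw [Real.sqrt_eq_rpow, Real.sqrt_eq_rpow]
    convert hCS using 3 <;> norm_num
  have hψ_eq : (∫ x, ψ x) = M ^ 2 * (∫ x, v x) - ∫ x, v x ^ 3 := by
    have heq : ψ = fun x => M ^ 2 * v x - v x ^ 3 := by
      funext x
      rw [hψ_def]
      ring
    rw [heq, integral_sub (hv_int.const_mul _) hv3_int,
      MeasureTheory.integral_const_mul]
  -- final algebra
  set A := ∫ x, v x with hA_def
  set P := ∫ x, v x ^ 3 with hP_def
  set D := ∫ x, u x ^ 2 with hD_def
  have hkey : (π * M ^ 2 / 2) ^ 2 ≤ (4 * D) * (M ^ 2 * A - P) := by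
    have hchain : π * M ^ 2 / 2 ≤ Real.sqrt (4 * D) * Real.sqrt (M ^ 2 * A - P) := by
      rw [← hψ_eq]
      exact habs.trans (hmono.trans hCS')
    have hL0 : 0 ≤ π * M ^ 2 / 2 := by positivity
    have := mul_self_le_mul_self hL0 hchain
    rw [mul_mul_mul_comm, Real.mul_self_sqrt (by positivity),
      Real.mul_self_sqrt (by rw [← hψ_eq]; exact hψI0)] at this
    nlinarith [this]
  have hA0 : 0 ≤ A := integral_nonneg hv0
  have hP0 : 0 ≤ P := integral_nonneg fun x => pow_nonneg (hv0 x) 3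
  have hDpos : 0 < D := by
    rcases lt_or_eq_of_le hD0 with h | h
    · exact h
    · exfalso
      rw [← h] at hkey
      have h1 : 0 < (π * M ^ 2 / 2) ^ 2 := by positivity
      nlinarith [hkey, h1]
  have hkey2 := mul_le_mul_of_nonneg_left hkey
    (le_of_lt (by positivity : (0:ℝ) < 4 * π ^ 2))
  have h16 : 16 * D * (P * π ^ 2) ≤ 16 * D * (4 * A ^ 2 * D) := by
    nlinarith [hkey2, sq_nonneg (π ^ 2 * M ^ 2 - 8 * A * D)]
  have hfin : P * π ^ 2 ≤ 4 * A ^ 2 * D :=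
    le_of_mul_le_mul_left h16 (by positivity)
  calc P ≤ 4 * A ^ 2 * D / π ^ 2 := by
        rw [le_div_iff₀ (by positivity)]
        exact hfin
    _ = 4 / π ^ 2 * A ^ 2 * D := by ring


lemma gn_eLpNorm_pow (h : ℝ → ℂ) (p : ℝ≥0∞) (n : ℕ) (hn : n ≠ 0) (hp : p = (n : ℝ≥0∞))
    (hint : Integrable (fun x => ‖h x‖ ^ n) (volume : Measure ℝ)) :
    eLpNorm h p volume ^ n = ENNReal.ofReal (∫ x, ‖h x‖ ^ n) := by
  subst hp
  have hn' : ((n : ℝ≥0∞)) ≠ 0 := by exact_mod_cast Nat.cast_ne_zero.mpr hn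
  rw [eLpNorm_eq_lintegral_rpow_enorm_toReal hn' (by simp)]
  have htr : ((n : ℝ≥0∞)).toReal = (n : ℝ) := by simp
  rw [htr]
  have hnR : (n : ℝ) ≠ 0 := Nat.cast_ne_zero.mpr hn
  have h1 : ((∫⁻ x, ‖h x‖ₑ ^ (n : ℝ)) ^ (1 / (n : ℝ))) ^ n
      = ∫⁻ x, ‖h x‖ₑ ^ (n : ℝ) := by
    rw [← ENNReal.rpow_natCast _ n, ← ENNReal.rpow_mul, one_div, inv_mul_cancel₀ hnR,
      ENNReal.rpow_one]
  rw [h1]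
  rw [ofReal_integral_eq_lintegral_ofReal hint
    (Eventually.of_forall fun x => pow_nonneg (norm_nonneg _) n)]
  apply lintegral_congr
  intro x
  rw [ENNReal.rpow_natCast, ENNReal.ofReal_pow (norm_nonneg _), ofReal_norm_eq_enorm]

/-- **Sharp Gagliardo–Nirenberg inequality.** For every `f ∈ H¹(ℝ)` (formalized as:
`f` is differentiable with derivative `f'`, and both `f` and `f'` are in `L²(ℝ)`),
one has `‖f‖_{L⁶}⁶ ≤ (4/π²) ‖f‖_{L²}⁴ ‖f'‖_{L²}²`. -/
theorem sharp_gagliardo_nirenberg (f f' : ℝ → ℂ)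
    (hderiv : ∀ x, HasDerivAt f (f' x) x)
    (hf : MemLp f 2 (volume : Measure ℝ))
    (hf' : MemLp f' 2 (volume : Measure ℝ)) :
    eLpNorm f 6 volume ^ (6 : ℕ) ≤
      ENNReal.ofReal (4 / Real.pi ^ 2) *
        eLpNorm f 2 volume ^ (4 : ℕ) * eLpNorm f' 2 volume ^ (2 : ℕ) := by
  have hkey : ∀ z : ℂ, ‖z‖ ^ 2 = z.re ^ 2 + z.im ^ 2 := by
    intro z
    rw [Complex.sq_norm, Complex.normSq_apply]
    ring
  set v : ℝ → ℝ := fun x => ‖f x‖ ^ 2 with hv_def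
  set w : ℝ → ℝ := fun x => 2 * ((f x).re * (f' x).re + (f x).im * (f' x).im) with hw_def
  set u : ℝ → ℝ := fun x => ‖f' x‖ with hu_def
  have hdv : ∀ x, HasDerivAt v (w x) x := by
    intro x
    have hre : HasDerivAt (fun y => (f y).re) ((f' x).re) x :=
      Complex.reCLM.hasFDerivAt.comp_hasDerivAt x (hderiv x)
    have him : HasDerivAt (fun y => (f y).im) ((f' x).im) x :=
      Complex.imCLM.hasFDerivAt.comp_hasDerivAt x (hderiv x)
    have h1 := (hre.pow 2).add (him.pow 2)
    have h2 : v = fun y => (f y).re ^ 2 + (f y).im ^ 2 := by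
      funext y
      rw [hv_def]
      exact hkey (f y)
    rw [h2]
    refine h1.congr_deriv ?_
    simp only [hw_def, Nat.cast_ofNat, Nat.add_one_sub_one, pow_one]
    ring
  have hv0 : ∀ x, 0 ≤ v x := fun x => sq_nonneg _
  have hu0 : ∀ x, 0 ≤ u x := fun x => norm_nonneg _
  have hw_le : ∀ x, |w x| ≤ 2 * Real.sqrt (v x) * u x := by
    intro x
    have hs : Real.sqrt (v x) = ‖f x‖ := Real.sqrt_sq (norm_nonneg _)
    rw [hs, hw_def, hu_def]
    have h2 : ((f x).re * (f' x).re + (f x).im * (f' x).im) ^ 2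
        ≤ (‖f x‖ * ‖f' x‖) ^ 2 := by
      rw [mul_pow, hkey (f x), hkey (f' x)]
      nlinarith [sq_nonneg ((f x).re * (f' x).im - (f x).im * (f' x).re)]
    have h3 : |(f x).re * (f' x).re + (f x).im * (f' x).im| ≤ ‖f x‖ * ‖f' x‖ := by
      rw [← Real.sqrt_sq_eq_abs, ← Real.sqrt_sq (mul_nonneg (norm_nonneg _) (norm_nonneg _))]
      exact Real.sqrt_le_sqrt h2
    calc |2 * ((f x).re * (f' x).re + (f x).im * (f' x).im)|
        = 2 * |(f x).re * (f' x).re + (f x).im * (f' x).im| := by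
          rw [abs_mul, abs_of_nonneg (by norm_num : (0:ℝ) ≤ 2)]
      _ ≤ 2 * (‖f x‖ * ‖f' x‖) := by linarith
      _ = 2 * ‖f x‖ * ‖f' x‖ := by ring
  have hv_int : Integrable v volume := hf.norm.integrable_sq
  have hu2 : MemLp u 2 volume := hf'.norm
  obtain ⟨hint3, hineq⟩ := gn_core v w u hdv hv0 hu0 hw_le hv_int hu2
  -- convert to eLpNorm statement
  have hint6 : Integrable (fun x => ‖f x‖ ^ 6) volume := by
    apply hint3.congr
    filter_upwards with x
    rw [hv_def]
    rw [← pow_mul]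
  have hA0 : 0 ≤ ∫ x, v x := integral_nonneg hv0
  have hD0 : 0 ≤ ∫ x, u x ^ 2 := integral_nonneg fun x => sq_nonneg _
  have hL : eLpNorm f 6 volume ^ (6:ℕ) = ENNReal.ofReal (∫ x, v x ^ 3) := by
    rw [gn_eLpNorm_pow f 6 6 (by norm_num) (by norm_num) hint6]
    congr 1
    apply MeasureTheory.integral_congr_ae
    filter_upwards with x
    rw [hv_def, ← pow_mul]
  have hF2 : eLpNorm f 2 volume ^ (2:ℕ) = ENNReal.ofReal (∫ x, v x) := by
    rw [gn_eLpNorm_pow f 2 2 (by norm_num) (by norm_num) (by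
      apply hv_int.congr
      filter_upwards with x
      rw [hv_def])]
  have hF4 : eLpNorm f 2 volume ^ (4:ℕ) = ENNReal.ofReal ((∫ x, v x) ^ 2) := by
    rw [show (4:ℕ) = 2 * 2 by norm_num, pow_mul, hF2, ← ENNReal.ofReal_pow hA0]
  have hD2 : eLpNorm f' 2 volume ^ (2:ℕ) = ENNReal.ofReal (∫ x, u x ^ 2) := by
    rw [gn_eLpNorm_pow f' 2 2 (by norm_num) (by norm_num) (by
      apply hu2.integrable_sq.congr
      filter_upwards with x
      rw [hu_def])]
  rw [hL, hF4, hD2, ← ENNReal.ofReal_mul (by positivity), ← ENNReal.ofReal_mul (by positivity)]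
  exact ENNReal.ofReal_le_ofReal hineq
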